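/- Let λ, μ > 0 with λμ = 1 and λ ≠ 1. The matrix A = x̃x̃* + Σ_{i=1}^3 ỹᵢỹᵢ* (with x = I₃, y₁ = λe₁₂ + μe₂₁, y₂ = λe₂₃ + μe₃₂, y₃ = μe₁₃ + λe₃₁) is not separable: A cannot be written as a finite sum Σ_k z̃_k z̃_k* with each z_k ∈ M₃ of rank at most 1. -/

import Mathlib

open Matrix BigOperators
open scoped ComplexOrder

noncomputable section

/-- vectorization `z̃` of an `m×n` matrix, as an element of `ℂ^n ⊗ ℂ^m`. -/
def vecz {m n : ℕ} (z : Matrix (Fin m) (Fin n) ℂ) : Fin n × Fin m → ℂ :=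
  fun p => z p.2 p.1

/-- the rank-one block matrix `z̃ z̃* ∈ M_n ⊗ M_m`. -/
def vv {m n : ℕ} (z : Matrix (Fin m) (Fin n) ℂ) :
    Matrix (Fin n × Fin m) (Fin n × Fin m) ℂ :=
  fun p q => vecz z p * star (vecz z q)

/-- partial (block) transpose on `M_n ⊗ M_m`. -/
def ptrans {m n : ℕ} (A : Matrix (Fin n × Fin m) (Fin n × Fin m) ℂ) :
    Matrix (Fin n × Fin m) (Fin n × Fin m) ℂ :=
  fun p q => A (p.1, q.2) (q.1, p.2)

/-- the bilinear pairing `⟨A, φ⟩ = Σ_{i,j} Tr(φ(e_{ij}) a_{ij}ᵗ)`. -/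
def pair {m n : ℕ} (A : Matrix (Fin n × Fin m) (Fin n × Fin m) ℂ)
    (φ : Matrix (Fin m) (Fin m) ℂ → Matrix (Fin n) (Fin n) ℂ) : ℂ :=
  ∑ i : Fin m, ∑ j : Fin m, ∑ k : Fin n, ∑ l : Fin n,
    φ (Matrix.single i j 1) k l * A (k, i) (l, j)

/-- `φ_V : X ↦ V* X V`. -/
def phiV {m n : ℕ} (V : Matrix (Fin m) (Fin n) ℂ) :
    Matrix (Fin m) (Fin m) ℂ → Matrix (Fin n) (Fin n) ℂ :=
  fun X => Vᴴ * X * V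

/-- `φ^W : X ↦ W* Xᵗ W`. -/
def phiW {m n : ℕ} (W : Matrix (Fin m) (Fin n) ℂ) :
    Matrix (Fin m) (Fin m) ℂ → Matrix (Fin n) (Fin n) ℂ :=
  fun X => Wᴴ * Xᵀ * W

/-- the map `Φ[a,b,c] : M₃ → M₃` of Cho–Kye–Lee. -/
def Phi (a b c : ℝ) : Matrix (Fin 3) (Fin 3) ℂ → Matrix (Fin 3) (Fin 3) ℂ :=
  fun x => Matrix.diagonal
    ![(a : ℂ) * x 0 0 + (b : ℂ) * x 1 1 + (c : ℂ) * x 2 2,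
      (a : ℂ) * x 1 1 + (b : ℂ) * x 2 2 + (c : ℂ) * x 0 0,
      (a : ℂ) * x 2 2 + (b : ℂ) * x 0 0 + (c : ℂ) * x 1 1] - x

/-- `y₁ = λe₁₂+μe₂₁`, `y₂ = λe₂₃+μe₃₂`, `y₃ = μe₁₃+λe₃₁`. -/
def yMat (lam mu : ℝ) : Fin 3 → Matrix (Fin 3) (Fin 3) ℂ :=
  ![!![0, (lam : ℂ), 0; (mu : ℂ), 0, 0; 0, 0, 0],
    !![0, 0, 0; 0, 0, (lam : ℂ); 0, (mu : ℂ), 0],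
    !![0, 0, (mu : ℂ); 0, 0, 0; (lam : ℂ), 0, 0]]

/-- the PPT entangled state `A = x̃x̃* + Σᵢ ỹᵢỹᵢ*` with `x = I₃`. -/
def Amat (lam mu : ℝ) : Matrix (Fin 3 × Fin 3) (Fin 3 × Fin 3) ℂ :=
  vv (1 : Matrix (Fin 3) (Fin 3) ℂ) + ∑ i : Fin 3, vv (yMat lam mu i)

/-! ### Auxiliary lemmas -/

lemma amgm3 (u v w : ℝ) (hu : 0 ≤ u) (hv : 0 ≤ v) (hw : 0 ≤ w) :
    3*(u*v*w) ≤ u*v^2 + v*w^2 + w*u^2 := by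
  have h := Real.geom_mean_le_arith_mean3_weighted (by norm_num : (0:ℝ) ≤ 1/3)
    (by norm_num : (0:ℝ) ≤ 1/3) (by norm_num : (0:ℝ) ≤ 1/3)
    (by positivity : (0:ℝ) ≤ u*v^2) (by positivity : (0:ℝ) ≤ v*w^2)
    (by positivity : (0:ℝ) ≤ w*u^2) (by norm_num)
  have key : (u*v^2)^((1:ℝ)/3) * (v*w^2)^((1:ℝ)/3) * (w*u^2)^((1:ℝ)/3) = u*v*w := by
    rw [← Real.mul_rpow (by positivity) (by positivity),
        ← Real.mul_rpow (by positivity) (by positivity)]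
    have h3 : u*v^2*(v*w^2)*(w*u^2) = (u*v*w)^(3:ℕ) := by ring
    rw [h3, ← Real.rpow_natCast (u*v*w) 3, ← Real.rpow_mul (by positivity)]
    norm_num
  rw [key] at h
  linarith

lemma E_nonneg (a0 a1 a2 b0 b1 b2 : ℝ) :
    2*(a0*b0*(a1*b1)) + 2*(a1*b1*(a2*b2)) + 2*(a0*b0*(a2*b2)) ≤
    a0^2*b0^2 + a1^2*b1^2 + a2^2*b2^2 + a0^2*b1^2 + a1^2*b2^2 + a2^2*b0^2 := by
  by_cases hb1 : b1 = 0
  · subst hb1; nlinarith [sq_nonneg (a0*b0 - a2*b2), sq_nonneg (a1*b2), sq_nonneg (a2*b0)]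
  · have hm : 0 < b0^2 + b1^2 := by positivity
    have hD : 0 < b1^4 + b1^2*b2^2 + b0^2*b2^2 := by positivity
    have hdet : 0 ≤ b0^2*b1^4 + b1^2*b2^4 + b2^2*b0^4 - 3*(b0^2*b1^2*b2^2) := by
      have := amgm3 (b0^2) (b1^2) (b2^2) (by positivity) (by positivity) (by positivity)
      nlinarith [this]
    nlinarith [mul_nonneg hD.le (sq_nonneg ((b0^2+b1^2)*a0 - b0*b1*a1 - b0*b2*a2)),
      sq_nonneg ((b1^4 + b1^2*b2^2 + b0^2*b2^2)*a1 - b1*b2*(2*b0^2+b1^2)*a2),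
      mul_nonneg (mul_nonneg hm.le hdet) (sq_nonneg a2),
      mul_pos hm hD]

lemma rank_le_one_decomp {z : Matrix (Fin 3) (Fin 3) ℂ} (h : z.rank ≤ 1) :
    ∃ u v : Fin 3 → ℂ, ∀ i j, z i j = u i * v j := by
  rw [Matrix.rank] at h
  obtain ⟨u₀, hu₀⟩ := finrank_le_one_iff.mp h
  have key : ∀ j : Fin 3, ∃ c : ℂ, ∀ i, z i j = (u₀ : Fin 3 → ℂ) i * c := by
    intro j
    obtain ⟨c, hc⟩ := hu₀ ⟨z.mulVec (Pi.single j 1), LinearMap.mem_range_self _ _⟩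
    have h2 : c • (u₀ : Fin 3 → ℂ) = z.mulVec (Pi.single j 1) := congrArg Subtype.val hc
    refine ⟨c, fun i => ?_⟩
    have h3 := congrFun h2 i
    simp only [Pi.smul_apply, smul_eq_mul, Matrix.mulVec_single, op_smul_eq_mul, Matrix.col_apply, mul_one] at h3
    rw [← h3, mul_comm]
  choose v hv using key
  exact ⟨fun i => (u₀ : Fin 3 → ℂ) i, v, fun i j => hv j i⟩

lemma pair_add {m n : ℕ} (A B : Matrix (Fin n × Fin m) (Fin n × Fin m) ℂ)
    (φ : Matrix (Fin m) (Fin m) ℂ → Matrix (Fin n) (Fin n) ℂ) :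
    pair (A + B) φ = pair A φ + pair B φ := by
  simp [pair, Matrix.add_apply, mul_add, Finset.sum_add_distrib]

lemma pair_zero {m n : ℕ} (φ : Matrix (Fin m) (Fin m) ℂ → Matrix (Fin n) (Fin n) ℂ) :
    pair (0 : Matrix (Fin n × Fin m) (Fin n × Fin m) ℂ) φ = 0 := by
  simp [pair]

lemma pair_sum {m n N : ℕ} (A : Fin N → Matrix (Fin n × Fin m) (Fin n × Fin m) ℂ)
    (φ : Matrix (Fin m) (Fin m) ℂ → Matrix (Fin n) (Fin n) ℂ) :
    pair (∑ k, A k) φ = ∑ k, pair (A k) φ :=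
  map_sum (⟨⟨fun A => pair A φ, pair_zero φ⟩, fun A B => pair_add A B φ⟩ :
    Matrix (Fin n × Fin m) (Fin n × Fin m) ℂ →+ ℂ) A Finset.univ

lemma pair_vv_201 (z : Matrix (Fin 3) (Fin 3) ℂ) :
    pair (vv z) (Phi 2 0 1) =
      2*(z 0 0 * star (z 0 0)) + z 0 1 * star (z 0 1) + 2*(z 1 1 * star (z 1 1))
      + z 1 2 * star (z 1 2) + z 2 0 * star (z 2 0) + 2*(z 2 2 * star (z 2 2))
      - (z 0 0 + z 1 1 + z 2 2) * star (z 0 0 + z 1 1 + z 2 2) := by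
  simp [pair, vv, vecz, Phi, Fin.sum_univ_three, Matrix.single,
    Matrix.diagonal, Matrix.sub_apply, Matrix.of_apply]
  ring

lemma pair_vv_210 (z : Matrix (Fin 3) (Fin 3) ℂ) :
    pair (vv z) (Phi 2 1 0) =
      2*(z 0 0 * star (z 0 0)) + z 0 2 * star (z 0 2) + z 1 0 * star (z 1 0)
      + 2*(z 1 1 * star (z 1 1)) + z 2 1 * star (z 2 1) + 2*(z 2 2 * star (z 2 2))
      - (z 0 0 + z 1 1 + z 2 2) * star (z 0 0 + z 1 1 + z 2 2) := by
  simp [pair, vv, vecz, Phi, Fin.sum_univ_three, Matrix.single,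
    Matrix.diagonal, Matrix.sub_apply, Matrix.of_apply]
  ring
lemma pair_rank1_201 {z : Matrix (Fin 3) (Fin 3) ℂ} (h : z.rank ≤ 1) :
    0 ≤ pair (vv z) (Phi 2 0 1) := by
  obtain ⟨u, v, hz⟩ := rank_le_one_decomp h
  have calc1 : pair (vv z) (Phi 2 0 1) =
      ((2*Complex.normSq (u 0 * v 0) + Complex.normSq (u 0 * v 1)
        + 2*Complex.normSq (u 1 * v 1) + Complex.normSq (u 1 * v 2)
        + Complex.normSq (u 2 * v 0) + 2*Complex.normSq (u 2 * v 2)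
        - Complex.normSq (u 0 * v 0 + u 1 * v 1 + u 2 * v 2) : ℝ) : ℂ) := by
    rw [pair_vv_201]
    simp only [hz, Complex.star_def, Complex.mul_conj]
    push_cast
    ring
  rw [calc1, Complex.zero_le_real]
  have h1 : ∀ i j, Complex.normSq (u i * v j)
      = ‖u i‖^2 * ‖v j‖^2 := by
    intro i j; rw [← Complex.sq_norm, norm_mul]; ring
  have habs : ‖u 0 * v 0 + u 1 * v 1 + u 2 * v 2‖
      ≤ ‖u 0‖ * ‖v 0‖ + ‖u 1‖ * ‖v 1‖
        + ‖u 2‖ * ‖v 2‖ := by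
    calc ‖u 0 * v 0 + u 1 * v 1 + u 2 * v 2‖
        ≤ ‖u 0 * v 0 + u 1 * v 1‖ + ‖u 2 * v 2‖ :=
          norm_add_le _ _
      _ ≤ ‖u 0 * v 0‖ + ‖u 1 * v 1‖ + ‖u 2 * v 2‖ := by
          linarith [norm_add_le (u 0 * v 0) (u 1 * v 1)]
      _ = _ := by rw [norm_mul, norm_mul, norm_mul]
  have h2 : Complex.normSq (u 0 * v 0 + u 1 * v 1 + u 2 * v 2)
      ≤ (‖u 0‖ * ‖v 0‖ + ‖u 1‖ * ‖v 1‖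
        + ‖u 2‖ * ‖v 2‖)^2 := by
    rw [← Complex.sq_norm]
    have hnn : 0 ≤ ‖u 0 * v 0 + u 1 * v 1 + u 2 * v 2‖ := norm_nonneg _
    nlinarith [habs, hnn]
  simp only [h1]
  nlinarith [h2, E_nonneg (‖u 0‖) (‖u 1‖) (‖u 2‖)
    (‖v 0‖) (‖v 1‖) (‖v 2‖)]

lemma pair_rank1_210 {z : Matrix (Fin 3) (Fin 3) ℂ} (h : z.rank ≤ 1) :
    0 ≤ pair (vv z) (Phi 2 1 0) := by
  obtain ⟨u, v, hz⟩ := rank_le_one_decomp h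
  have calc1 : pair (vv z) (Phi 2 1 0) =
      ((2*Complex.normSq (u 0 * v 0) + Complex.normSq (u 0 * v 2)
        + Complex.normSq (u 1 * v 0) + 2*Complex.normSq (u 1 * v 1)
        + Complex.normSq (u 2 * v 1) + 2*Complex.normSq (u 2 * v 2)
        - Complex.normSq (u 0 * v 0 + u 1 * v 1 + u 2 * v 2) : ℝ) : ℂ) := by
    rw [pair_vv_210]
    simp only [hz, Complex.star_def, Complex.mul_conj]
    push_cast
    ring
  rw [calc1, Complex.zero_le_real]
  have h1 : ∀ i j, Complex.normSq (u i * v j)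
      = ‖u i‖^2 * ‖v j‖^2 := by
    intro i j; rw [← Complex.sq_norm, norm_mul]; ring
  have habs : ‖u 0 * v 0 + u 1 * v 1 + u 2 * v 2‖
      ≤ ‖u 0‖ * ‖v 0‖ + ‖u 1‖ * ‖v 1‖
        + ‖u 2‖ * ‖v 2‖ := by
    calc ‖u 0 * v 0 + u 1 * v 1 + u 2 * v 2‖
        ≤ ‖u 0 * v 0 + u 1 * v 1‖ + ‖u 2 * v 2‖ :=
          norm_add_le _ _
      _ ≤ ‖u 0 * v 0‖ + ‖u 1 * v 1‖ + ‖u 2 * v 2‖ := by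
          linarith [norm_add_le (u 0 * v 0) (u 1 * v 1)]
      _ = _ := by rw [norm_mul, norm_mul, norm_mul]
  have h2 : Complex.normSq (u 0 * v 0 + u 1 * v 1 + u 2 * v 2)
      ≤ (‖u 0‖ * ‖v 0‖ + ‖u 1‖ * ‖v 1‖
        + ‖u 2‖ * ‖v 2‖)^2 := by
    rw [← Complex.sq_norm]
    have hnn : 0 ≤ ‖u 0 * v 0 + u 1 * v 1 + u 2 * v 2‖ := norm_nonneg _
    nlinarith [habs, hnn]
  simp only [h1]
  nlinarith [h2, E_nonneg (‖v 0‖) (‖v 1‖) (‖v 2‖)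
    (‖u 0‖) (‖u 1‖) (‖u 2‖)]
lemma pairA_201 (lam mu : ℝ) :
    pair (Amat lam mu) (Phi 2 0 1) = ((3*lam^2 - 3 : ℝ) : ℂ) := by
  rw [Amat, pair_add, pair_sum, Fin.sum_univ_three, pair_vv_201, pair_vv_201,
    pair_vv_201, pair_vv_201]
  simp [yMat, Matrix.one_apply, Complex.star_def, Complex.conj_ofReal, Matrix.vecHead, Matrix.vecTail]
  ring

lemma pairA_210 (lam mu : ℝ) :
    pair (Amat lam mu) (Phi 2 1 0) = ((3*mu^2 - 3 : ℝ) : ℂ) := by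
  rw [Amat, pair_add, pair_sum, Fin.sum_univ_three, pair_vv_210, pair_vv_210,
    pair_vv_210, pair_vv_210]
  simp [yMat, Matrix.one_apply, Complex.star_def, Complex.conj_ofReal, Matrix.vecHead, Matrix.vecTail]
  ring

/-- `A` is not separable: it is not a finite sum `Σ z̃ₖz̃ₖ*` with each
`zₖ` of rank at most one. -/
theorem stmt_11 (lam mu : ℝ) (hl : 0 < lam) (hm : 0 < mu) (hlm : lam * mu = 1)
    (hne : lam ≠ 1) :
    ¬ ∃ (N : ℕ) (z : Fin N → Matrix (Fin 3) (Fin 3) ℂ),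
        (∀ k, Matrix.rank (z k) ≤ 1) ∧ Amat lam mu = ∑ k, vv (z k) := by
  rintro ⟨N, z, hrank, hsum⟩
  rcases lt_or_gt_of_ne hne with hlt | hgt
  · have h2 : pair (Amat lam mu) (Phi 2 0 1) = ∑ k, pair (vv (z k)) (Phi 2 0 1) := by
      rw [hsum, pair_sum]
    have h3 : (0:ℂ) ≤ ∑ k, pair (vv (z k)) (Phi 2 0 1) :=
      Finset.sum_nonneg fun k _ => pair_rank1_201 (hrank k)
    rw [← h2, pairA_201, Complex.zero_le_real] at h3
    nlinarith [h3, hlt, hl]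
  · have hmu : mu < 1 := by
      nlinarith
    have h2 : pair (Amat lam mu) (Phi 2 1 0) = ∑ k, pair (vv (z k)) (Phi 2 1 0) := by
      rw [hsum, pair_sum]
    have h3 : (0:ℂ) ≤ ∑ k, pair (vv (z k)) (Phi 2 1 0) :=
      Finset.sum_nonneg fun k _ => pair_rank1_210 (hrank k)
    rw [← h2, pairA_210, Complex.zero_le_real] at h3
    nlinarith [h3, hmu, hm]
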